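/- arXiv:2206.06722 — 3 statements merged into one kernel-verified Lean document; each statement's English description precedes it below -/
import Mathlib

section
/- Let u₁·v₁^ω and u₂·v₂^ω be ultimately periodic words with v₁, v₂ nonempty, and let t, t' be positions. Let b = max(|u₁| - t, |u₂| - t') + lcm(|v₁|, |v₂|) (where subtraction is truncated at 0). Then the suffixes u₁v₁^ω[t,∞) and u₂v₂^ω[t',∞) are equal (as infinite words) if and only if they agree on their first b symbols, i.e., u₁v₁^ω[t+k] = u₂v₂^ω[t'+k] for all k < b. -/
def suffixW {A : Type*} (w : ℕ → A) (k : ℕ) : ℕ → A := fun n => w (n + k)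

def upWord {A : Type*} (u v : List A) (hv : v ≠ []) : ℕ → A := fun n =>
  if h : n < u.length then u.get ⟨n, h⟩
  else v.get ⟨(n - u.length) % v.length, Nat.mod_lt _ (List.length_pos_iff.mpr hv)⟩

lemma upWord_period {A : Type*} (u v : List A) (hv : v ≠ []) (n j : ℕ)
    (hn : u.length ≤ n) :
    upWord u v hv (n + j * v.length) = upWord u v hv n := by
  unfold upWord
  have h1 : ¬ n + j * v.length < u.length := by omega
  have h2 : ¬ n < u.length := by omega
  rw [dif_neg h1, dif_neg h2]
  congr 2
  have : n + j * v.length - u.length = (n - u.length) + j * v.length := by omega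
  rw [this, Nat.add_mul_mod_self_right]

theorem suffix_eq_iff_agree_on_prefix {A : Type*} (u₁ v₁ u₂ v₂ : List A)
    (h₁ : v₁ ≠ []) (h₂ : v₂ ≠ []) (t t' : ℕ) :
    suffixW (upWord u₁ v₁ h₁) t = suffixW (upWord u₂ v₂ h₂) t' ↔
      ∀ k < max (u₁.length - t) (u₂.length - t') + Nat.lcm v₁.length v₂.length,
        upWord u₁ v₁ h₁ (t + k) = upWord u₂ v₂ h₂ (t' + k) := by
  constructor
  · intro h k _
    have := congrFun h k
    simpa [suffixW, Nat.add_comm] using this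
  · intro h
    funext n
    simp only [suffixW]
    set m := max (u₁.length - t) (u₂.length - t') with hm
    set L := Nat.lcm v₁.length v₂.length with hLdef
    have hL : 0 < L := Nat.lcm_pos (List.length_pos_iff.mpr h₁) (List.length_pos_iff.mpr h₂)
    by_cases hn : n < m + L
    · have := h n hn
      simpa [Nat.add_comm] using this
    · push_neg at hn
      set k' := m + (n - m) % L with hk'def
      have hk' : k' < m + L := by
        have := Nat.mod_lt (n - m) hL
        omega
      obtain ⟨q, hq⟩ : ∃ q, n = k' + q * L := by
        refine ⟨(n - m) / L, ?_⟩
        have hdm := Nat.div_add_mod (n - m) L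
        rw [Nat.mul_comm]
        omega
      have hd1 : v₁.length ∣ L := Nat.dvd_lcm_left _ _
      have hd2 : v₂.length ∣ L := Nat.dvd_lcm_right _ _
      obtain ⟨a, ha⟩ := hd1
      obtain ⟨b, hb⟩ := hd2
      have e1 : upWord u₁ v₁ h₁ (n + t) = upWord u₁ v₁ h₁ (k' + t) := by
        have h1 : u₁.length ≤ k' + t := by omega
        calc upWord u₁ v₁ h₁ (n + t)
            = upWord u₁ v₁ h₁ ((k' + t) + (q * a) * v₁.length) := by
              congr 1
              rw [hq, ha]; ring
          _ = upWord u₁ v₁ h₁ (k' + t) := upWord_period _ _ _ _ _ h1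
      have e2 : upWord u₂ v₂ h₂ (n + t') = upWord u₂ v₂ h₂ (k' + t') := by
        have h2 : u₂.length ≤ k' + t' := by omega
        calc upWord u₂ v₂ h₂ (n + t')
            = upWord u₂ v₂ h₂ ((k' + t') + (q * b) * v₂.length) := by
              congr 1
              rw [hq, hb]; ring
          _ = upWord u₂ v₂ h₂ (k' + t') := upWord_period _ _ _ _ _ h2
      rw [e1, e2]
      have := h k' hk'
      simpa [Nat.add_comm] using this
end

section
/- On an ultimately periodic word u·v^ω with v nonempty, the valuation of any LTL formula φ on any suffix is determined by its values on the first |u|+|v| suffixes: for all i, V(φ, (uv^ω)[|u|+i, ∞)) = V(φ, (uv^ω)[|u| + (i mod |v|), ∞)). -/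
inductive LTL (P : Type*) where
  | atom : P → LTL P
  | neg : LTL P → LTL P
  | disj : LTL P → LTL P → LTL P
  | next : LTL P → LTL P
  | untl : LTL P → LTL P → LTL P

def sat {P : Type*} : LTL P → (ℕ → Set P) → Prop
  | .atom p, w => p ∈ w 0
  | .neg φ, w => ¬ sat φ w
  | .disj φ ψ, w => sat φ w ∨ sat ψ w
  | .next φ, w => sat φ (suffixW w 1)
  | .untl φ ψ, w => ∃ i, sat ψ (suffixW w i) ∧ ∀ j < i, sat φ (suffixW w j)

theorem sat_suffix_mod {P : Type*} (u v : List (Set P)) (hv : v ≠ []) (φ : LTL P) (i : ℕ) :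
    sat φ (suffixW (upWord u v hv) (u.length + i)) ↔
      sat φ (suffixW (upWord u v hv) (u.length + i % v.length)) := by
  have h : suffixW (upWord u v hv) (u.length + i) =
      suffixW (upWord u v hv) (u.length + i % v.length) := by
    funext n
    simp only [suffixW, upWord]
    rw [dif_neg (by omega), dif_neg (by omega)]
    congr 1
    simp only [Fin.mk.injEq]
    have h1 : n + (u.length + i) - u.length = n + i := by omega
    have h2 : n + (u.length + i % v.length) - u.length = n + i % v.length := by omega
    rw [h1, h2, Nat.add_mod_mod]
  rw [h]
end

section
/- Existence of a consistent formula for any sample: given finite disjoint sets P and N of ultimately periodic words over 2^AP (AP finite and nonempty), with every word in P distinct from every word in N, there exists an LTL formula φ such that V(φ, α) = 1 for all α ∈ P and V(φ, β) = 0 for all β ∈ N. -/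
namespace LTLAux

def nextN {P : Type*} : ℕ → LTL P → LTL P
  | 0, φ => φ
  | n+1, φ => .next (nextN n φ)

lemma sat_nextN {P : Type*} (n : ℕ) (φ : LTL P) (w : ℕ → Set P) :
    sat (nextN n φ) w ↔ sat φ (suffixW w n) := by
  induction n generalizing w with
  | zero => rfl
  | succ n ih =>
      show sat (nextN n φ) (suffixW w 1) ↔ _
      rw [ih]
      rfl

def conjL {P : Type*} (φ ψ : LTL P) : LTL P := .neg (.disj (.neg φ) (.neg ψ))

lemma sat_conjL {P : Type*} (φ ψ : LTL P) (w : ℕ → Set P) :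
    sat (conjL φ ψ) w ↔ sat φ w ∧ sat ψ w := by
  simp only [conjL, sat]
  tauto

def bigDisj {P : Type*} (fls : LTL P) : List (LTL P) → LTL P
  | [] => fls
  | φ :: l => .disj φ (bigDisj fls l)

lemma sat_bigDisj {P : Type*} (fls : LTL P) (hf : ∀ w, ¬ sat fls w)
    (l : List (LTL P)) (w : ℕ → Set P) :
    sat (bigDisj fls l) w ↔ ∃ φ ∈ l, sat φ w := by
  induction l with
  | nil => simp [bigDisj, hf w]
  | cons φ l ih =>
      show sat φ w ∨ _ ↔ _
      rw [ih]; simp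

def bigConj {P : Type*} (tru : LTL P) : List (LTL P) → LTL P
  | [] => tru
  | φ :: l => conjL φ (bigConj tru l)

lemma sat_bigConj {P : Type*} (tru : LTL P) (ht : ∀ w, sat tru w)
    (l : List (LTL P)) (w : ℕ → Set P) :
    sat (bigConj tru l) w ↔ ∀ φ ∈ l, sat φ w := by
  induction l with
  | nil => simp [bigConj, ht w]
  | cons φ l ih =>
      show sat (conjL _ _) w ↔ _
      rw [sat_conjL, ih]; simp

lemma separating {P : Type*} (α β : ℕ → Set P) (h : α ≠ β) :
    ∃ φ : LTL P, sat φ α ∧ ¬ sat φ β := by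
  have : ∃ n, α n ≠ β n := by
    by_contra hc
    push_neg at hc
    exact h (funext hc)
  obtain ⟨n, hn⟩ := this
  have : ∃ p, ¬ (p ∈ α n ↔ p ∈ β n) := by
    by_contra hc
    push_neg at hc
    exact hn (Set.ext hc)
  obtain ⟨p, hp⟩ := this
  have key : ∀ γ : ℕ → Set P, sat (nextN n (.atom p)) γ ↔ p ∈ γ n := by
    intro γ
    rw [sat_nextN]
    show p ∈ suffixW γ n 0 ↔ _
    simp [suffixW]
  by_cases hα : p ∈ α n
  · refine ⟨nextN n (.atom p), (key α).mpr hα, fun hβ => ?_⟩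
    exact hp ⟨fun _ => (key β).mp hβ, fun _ => hα⟩
  · have hβmem : p ∈ β n := by
      by_contra h
      exact hp ⟨fun h' => absurd h' hα, fun h' => absurd h' h⟩
    refine ⟨nextN n (.neg (.atom p)), ?_, ?_⟩
    · rw [sat_nextN]
      show ¬ sat (.atom p) _
      intro h
      exact hα ((key α).mp (by rw [sat_nextN]; exact h))
    · rw [sat_nextN]
      show ¬ ¬ sat (.atom p) _
      intro h
      exact h ((key β).mpr hβmem |> fun hh => by rw [sat_nextN] at hh; exact hh)

end LTLAux

theorem consistent_formula_exists {AP : Type*} [Fintype AP] [Nonempty AP]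
    (Pos Neg : Set (ℕ → Set AP)) (hPfin : Pos.Finite) (hNfin : Neg.Finite)
    (hup : ∀ w ∈ Pos ∪ Neg, ∃ (u v : List (Set AP)) (hv : v ≠ []), w = upWord u v hv)
    (hdisj : ∀ w ∈ Pos, w ∉ Neg) :
    ∃ φ : LTL AP, (∀ w ∈ Pos, sat φ w) ∧ (∀ w ∈ Neg, ¬ sat φ w) := by
  classical
  open LTLAux in
  obtain ⟨p0⟩ := ‹Nonempty AP›
  -- false and true formulas
  set fls : LTL AP := conjL (.atom p0) (.neg (.atom p0)) with hflsdef
  have hfls : ∀ w, ¬ sat fls w := by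
    intro w hw
    rw [hflsdef, sat_conjL] at hw
    exact hw.2 hw.1
  set tru : LTL AP := .neg fls with htrudef
  have htru : ∀ w, sat tru w := fun w => hfls w
  -- separating formula choice
  have gsep : ∀ α β : ℕ → Set AP, ∃ φ : LTL AP, α ≠ β → (sat φ α ∧ ¬ sat φ β) := by
    intro α β
    by_cases h : α ≠ β
    · obtain ⟨φ, h1, h2⟩ := separating α β h
      exact ⟨φ, fun _ => ⟨h1, h2⟩⟩
    · exact ⟨fls, fun hc => absurd hc h⟩
  choose g hg using gsep
  set PL := hPfin.toFinset.toList with hPL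
  set NL := hNfin.toFinset.toList with hNL
  refine ⟨bigDisj fls (PL.map (fun α => bigConj tru (NL.map (g α)))), ?_, ?_⟩
  · intro w hw
    rw [sat_bigDisj fls hfls]
    refine ⟨bigConj tru (NL.map (g w)), ?_, ?_⟩
    · exact List.mem_map_of_mem (by simp [hPL, hw])
    · rw [sat_bigConj tru htru]
      intro φ hφ
      obtain ⟨β, hβ, rfl⟩ := List.mem_map.mp hφ
      have hβN : β ∈ Neg := by simpa [hNL] using hβ
      have hne : w ≠ β := fun h => hdisj w hw (h ▸ hβN)
      exact (hg w β hne).1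
  · intro w hw hsat
    rw [sat_bigDisj fls hfls] at hsat
    obtain ⟨φ, hφ, hsφ⟩ := hsat
    obtain ⟨α, hα, rfl⟩ := List.mem_map.mp hφ
    have hαP : α ∈ Pos := by simpa [hPL] using hα
    rw [sat_bigConj tru htru] at hsφ
    have hne : α ≠ w := fun h => hdisj α hαP (h ▸ hw)
    exact (hg α w hne).2 (hsφ _ (List.mem_map_of_mem (by simp [hNL, hw])))
end
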